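/- Let φ : R → Q be an injective ring epimorphism with Q flat as a left R-module. Then every left R-module M that is weak-injective (i.e., Ext^1_R(I, M) = 0 for all left R-modules I of weak/flat dimension ≤ 1) is h-divisible and Matlis-cotorsion: M equals the image of the evaluation map Hom_R(Q, M) → M, and Ext^1_R(Q, M) = 0. -/

import Mathlib

open MulOpposite

universe u

/-- `φ : R →+* Q` is an epimorphism in the category of rings. -/
def IsRingEpi {R Q : Type u} [Ring R] [Ring Q] (φ : R →+* Q) : Prop :=
  ∀ (T : Type u) [Ring T] (ψ ω : Q →+* T), ψ.comp φ = ω.comp φ → ψ = ω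

section NCTensor

variable (R : Type u) [Ring R] (M : Type u) [AddCommGroup M] [Module Rᵐᵒᵖ M]
  (N : Type u) [AddCommGroup N] [Module R N]

/-- Relations defining the tensor product `M ⊗_R N` of a right `R`-module `M`
and a left `R`-module `N` over a (possibly noncommutative) ring `R`. -/
def ncRels : AddSubgroup (FreeAbelianGroup (M × N)) :=
  AddSubgroup.closure
    ({x | ∃ m m' n, x = FreeAbelianGroup.of (m + m', n) - FreeAbelianGroup.of (m, n) -
        FreeAbelianGroup.of (m', n)} ∪
     {x | ∃ m n n', x = FreeAbelianGroup.of (m, n + n') - FreeAbelianGroup.of (m, n) -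
        FreeAbelianGroup.of (m, n')} ∪
     {x | ∃ (r : R) (m : M) (n : N), x = FreeAbelianGroup.of (op r • m, n) -
        FreeAbelianGroup.of (m, r • n)})

/-- The tensor product `M ⊗_R N` of a right `R`-module and a left `R`-module over a
(possibly noncommutative) ring `R`, as an abelian group. -/
def NCTensor : Type u := FreeAbelianGroup (M × N) ⧸ ncRels R M N

instance : AddCommGroup (NCTensor R M N) :=
  QuotientAddGroup.Quotient.addCommGroup _

/-- The pure tensor `m ⊗ n` in `M ⊗_R N`. -/
def NCTensor.tmul (m : M) (n : N) : NCTensor R M N :=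
  QuotientAddGroup.mk (FreeAbelianGroup.of (m, n))

end NCTensor

/-- A left `R`-module `N` is flat if tensoring right `R`-modules with `N`
preserves injectivity. -/
def IsFlatLeftModule (R : Type u) [Ring R] (N : Type u) [AddCommGroup N] [Module R N] : Prop :=
  ∀ (A B : Type u) [AddCommGroup A] [AddCommGroup B] [Module Rᵐᵒᵖ A] [Module Rᵐᵒᵖ B]
    (i : A →ₗ[Rᵐᵒᵖ] B), Function.Injective i →
    ∀ g : NCTensor R A N →+ NCTensor R B N,
      (∀ a n, g (NCTensor.tmul R A N a n) = NCTensor.tmul R B N (i a) n) →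
      Function.Injective g

open CategoryTheory in
/-- The Ext group `Ext^n_A(M, N)` for modules over an arbitrary ring `A`,
computed in the abelian category of `A`-modules. -/
noncomputable abbrev extGroup (A : Type u) [Ring A] (n : ℕ) (M : Type u) [AddCommGroup M]
    [Module A M] (N : Type u) [AddCommGroup N] [Module A N] : Type u :=
  ((Ext ℤ (ModuleCat.{u} A) n).obj (Opposite.op (ModuleCat.of A M))).obj (ModuleCat.of A N)

/-- A left `R`-module `I` has weak (flat) dimension at most 1: there is a short exact
sequence `0 → F₁ → F₀ → I → 0` with `F₁` and `F₀` flat. -/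
def FlatDimLE1 (R : Type u) [Ring R] (I : Type u) [AddCommGroup I] [Module R I] : Prop :=
  ∃ (F1 : Type u) (a1 : AddCommGroup F1), letI := a1; ∃ (m1 : Module R F1), letI := m1;
  ∃ (F0 : Type u) (a0 : AddCommGroup F0), letI := a0; ∃ (m0 : Module R F0), letI := m0;
  ∃ (i : F1 →ₗ[R] F0) (p : F0 →ₗ[R] I),
    IsFlatLeftModule R F1 ∧ IsFlatLeftModule R F0 ∧
    Function.Injective i ∧ Function.Surjective p ∧ LinearMap.range i = LinearMap.ker p


section Aux

open CategoryTheory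

namespace NCTensor

variable {R : Type u} [Ring R] {M : Type u} [AddCommGroup M] [Module Rᵐᵒᵖ M]
  {N : Type u} [AddCommGroup N] [Module R N]

lemma mk_rel {x y : FreeAbelianGroup (M × N)} (h : x - y ∈ ncRels R M N) :
    (QuotientAddGroup.mk x : NCTensor R M N) = QuotientAddGroup.mk y := by
  rw [QuotientAddGroup.eq]
  have : -(x - y) ∈ ncRels R M N := neg_mem h
  rwa [neg_sub, sub_eq_add_neg, add_comm] at this

lemma tmul_add_left (m m' : M) (n : N) :
    tmul R M N (m + m') n = tmul R M N m n + tmul R M N m' n := by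
  have : (QuotientAddGroup.mk (FreeAbelianGroup.of ((m + m' : M), n)) : NCTensor R M N) =
      QuotientAddGroup.mk (FreeAbelianGroup.of (m, n) + FreeAbelianGroup.of (m', n)) := by
    apply mk_rel
    apply AddSubgroup.subset_closure
    refine Or.inl (Or.inl ⟨m, m', n, ?_⟩)
    abel
  exact this

lemma tmul_add_right (m : M) (n n' : N) :
    tmul R M N m (n + n') = tmul R M N m n + tmul R M N m n' := by
  have : (QuotientAddGroup.mk (FreeAbelianGroup.of (m, n + n')) : NCTensor R M N) =
      QuotientAddGroup.mk (FreeAbelianGroup.of (m, n) + FreeAbelianGroup.of (m, n')) := by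
    apply mk_rel
    apply AddSubgroup.subset_closure
    refine Or.inl (Or.inr ⟨m, n, n', ?_⟩)
    abel
  exact this

lemma tmul_smul (r : R) (m : M) (n : N) :
    tmul R M N (op r • m) n = tmul R M N m (r • n) := by
  apply mk_rel
  apply AddSubgroup.subset_closure
  exact Or.inr ⟨r, m, n, rfl⟩

lemma tmul_zero_right (m : M) : tmul R M N m 0 = (0 : NCTensor R M N) := by
  have h := tmul_add_right (R := R) m (0 : N) (0 : N)
  rw [add_zero] at h
  exact left_eq_add.mp h

/-- Extensionality for additive maps out of `NCTensor`. -/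
lemma hom_ext {G : Type*} [AddCommGroup G] (g g' : NCTensor R M N →+ G)
    (h : ∀ m n, g (tmul R M N m n) = g' (tmul R M N m n)) : g = g' := by
  have : g.comp (QuotientAddGroup.mk' (ncRels R M N)) =
      g'.comp (QuotientAddGroup.mk' (ncRels R M N)) := by
    apply FreeAbelianGroup.lift_ext
    intro x
    exact h x.1 x.2
  ext x
  obtain ⟨y, rfl⟩ := QuotientAddGroup.mk'_surjective (ncRels R M N) x
  exact DFunLike.congr_fun this y

/-- The additive map `NCTensor R M R →+ M` sending `m ⊗ r` to `op r • m`. -/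
noncomputable def contract : NCTensor R M R →+ M := by
  refine QuotientAddGroup.lift (ncRels R M R)
    (FreeAbelianGroup.lift (fun p : M × R => op p.2 • p.1)) ?_
  intro x hx
  refine AddSubgroup.closure_le _ |>.mpr ?_ hx
  rintro z ((⟨m, m', n, rfl⟩ | ⟨m, n, n', rfl⟩) | ⟨r, m, n, rfl⟩) <;>
    simp [AddMonoidHom.mem_ker, smul_add, add_smul, mul_smul, smul_smul, sub_eq_zero,
      ← op_mul, mul_comm]

@[simp] lemma contract_tmul (m : M) (r : R) : contract (tmul R M R m r) = op r • m := by
  show QuotientAddGroup.lift (ncRels R M R)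
    (FreeAbelianGroup.lift fun p : M × R => op p.2 • p.1) _
    (QuotientAddGroup.mk (FreeAbelianGroup.of (m, r))) = op r • m
  rw [QuotientAddGroup.lift_mk]
  exact FreeAbelianGroup.lift_apply_of _ _

/-- The additive map `M →+ NCTensor R M R`, `m ↦ m ⊗ 1`. -/
def expand : M →+ NCTensor R M R where
  toFun m := tmul R M R m 1
  map_zero' := by
    have h := tmul_add_left (R := R) (0 : M) (0 : M) (1 : R)
    rw [add_zero] at h
    exact (left_eq_add.mp h).symm ▸ rfl
  map_add' m m' := tmul_add_left m m' 1

@[simp] lemma expand_apply (m : M) : expand m = tmul R M R m 1 := rfl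

lemma contract_expand (m : M) : contract (expand (R := R) m) = m := by simp

lemma expand_contract (x : NCTensor R M R) : expand (contract x) = x := by
  have : (expand.comp (contract (R := R) (M := M))) = AddMonoidHom.id _ := by
    apply hom_ext
    intro m r
    simp only [AddMonoidHom.comp_apply, contract_tmul, expand_apply, AddMonoidHom.id_apply]
    rw [tmul_smul, smul_eq_mul, mul_one]
  exact DFunLike.congr_fun this x

lemma contract_injective : Function.Injective (contract (R := R) (M := M)) := by
  intro x y h
  rw [← expand_contract (R := R) x, ← expand_contract (R := R) y, h]

end NCTensor

/-- The ring `R` is flat as a left module over itself. -/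
lemma isFlatLeftModule_self (R : Type u) [Ring R] : IsFlatLeftModule R R := by
  intro A B _ _ _ _ i hi g hg
  have key : (NCTensor.contract (R := R) (M := B)).comp g =
      i.toAddMonoidHom.comp (NCTensor.contract (R := R) (M := A)) := by
    apply NCTensor.hom_ext
    intro a r
    simp [hg a r, map_smul]
  intro x y hxy
  apply NCTensor.contract_injective (R := R) (M := A)
  apply hi
  have h1 := DFunLike.congr_fun key x
  have h2 := DFunLike.congr_fun key y
  simp only [AddMonoidHom.comp_apply, LinearMap.toAddMonoidHom_coe] at h1 h2
  rw [← h1, ← h2, hxy]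

lemma subsingleton_nctensor_punit (R : Type u) [Ring R] (A : Type u) [AddCommGroup A]
    [Module Rᵐᵒᵖ A] : Subsingleton (NCTensor R A PUnit) := by
  have hid : (AddMonoidHom.id (NCTensor R A PUnit)) = 0 := by
    apply NCTensor.hom_ext
    intro a n
    have : n = 0 := Subsingleton.elim _ _
    simp only [this, AddMonoidHom.id_apply, AddMonoidHom.zero_apply, NCTensor.tmul_zero_right]
  refine ⟨fun x y => ?_⟩
  have hx := DFunLike.congr_fun hid x
  have hy := DFunLike.congr_fun hid y
  simp only [AddMonoidHom.id_apply, AddMonoidHom.zero_apply] at hx hy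
  rw [hx, hy]

/-- The zero module is flat. -/
lemma isFlatLeftModule_punit (R : Type u) [Ring R] : IsFlatLeftModule R PUnit := by
  intro A B _ _ _ _ i hi g hg
  have := subsingleton_nctensor_punit R A
  intro x y _
  exact Subsingleton.elim x y

open CategoryTheory in
/-- If `Ext¹(S.X₃, S.X₁)` vanishes for a short exact sequence `S` of modules,
then `S.f` admits a retraction. -/
lemma retraction_of_ext1_subsingleton {R : Type u} [Ring R]
    (S : ShortComplex (ModuleCat.{u} R)) (hS : S.ShortExact)
    (hext : Subsingleton (((Ext ℤ (ModuleCat.{u} R) 1).obj (Opposite.op S.X₃)).obj S.X₁)) :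
    ∃ r : S.X₂ ⟶ S.X₁, S.f ≫ r = 𝟙 S.X₁ := by
  have := hS.mono_f
  have := hS.epi_g
  let P : ProjectiveResolution S.X₃ := ProjectiveResolution.of S.X₃
  -- the homology of the Hom complex in degree 1 vanishes
  have hzero : Limits.IsZero ((P.complex.linearYonedaObj ℤ S.X₁).homology 1) := by
    have : Subsingleton (((Ext ℤ (ModuleCat.{u} R) 1).obj (Opposite.op S.X₃)).obj S.X₁) := hext
    exact Limits.IsZero.of_iso (ModuleCat.isZero_of_subsingleton _) (P.isoExt 1 S.X₁).symm
  have hexact : ((P.complex.linearYonedaObj ℤ S.X₁).sc' 0 1 2).Exact := by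
    have h := (P.complex.linearYonedaObj ℤ S.X₁).exactAt_iff' 0 1 2 (by simp) (by simp)
    rw [← h, HomologicalComplex.exactAt_iff_isZero_homology]
    exact hzero
  -- translate exactness into a concrete lifting statement
  have key : ∀ f1 : P.complex.X 1 ⟶ S.X₁, P.complex.d 2 1 ≫ f1 = 0 →
      ∃ g0 : P.complex.X 0 ⟶ S.X₁, P.complex.d 1 0 ≫ g0 = f1 := by
    intro f1 hf1
    rw [ShortComplex.moduleCat_exact_iff] at hexact
    obtain ⟨g0, hg0⟩ := hexact f1 (by
      show (Linear.leftComp ℤ S.X₁ (P.complex.d 2 1)) f1 = 0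
      simpa [Linear.leftComp] using hf1)
    exact ⟨g0, hg0⟩
  -- choose a lift of π₀ through S.g
  have := P.projective 0
  have := P.projective 1
  let l : P.complex.X 0 ⟶ S.X₂ := Projective.factorThru (X := S.X₃) (P.π.f 0) S.g
  have hl : l ≫ S.g = P.π.f 0 := Projective.factorThru_comp _ _
  -- the induced map P₁ ⟶ S.X₁
  have hdl : (P.complex.d 1 0 ≫ l) ≫ S.g = 0 := by
    rw [Category.assoc, hl]
    exact P.complex_d_comp_π_f_zero
  let f1 : P.complex.X 1 ⟶ S.X₁ := hS.exact.lift (P.complex.d 1 0 ≫ l) hdl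
  have hf1 : f1 ≫ S.f = P.complex.d 1 0 ≫ l := hS.exact.lift_f _ _
  have hcocycle : P.complex.d 2 1 ≫ f1 = 0 := by
    rw [← cancel_mono S.f, Category.assoc, hf1, Limits.zero_comp,
      ← Category.assoc, HomologicalComplex.d_comp_d, Limits.zero_comp]
  obtain ⟨g0, hg0⟩ := key f1 hcocycle
  -- the corrected lift kills the image of d₁
  let h : P.complex.X 0 ⟶ S.X₂ := l - g0 ≫ S.f
  have hdh : P.complex.d 1 0 ≫ h = 0 := by
    simp only [h, Preadditive.comp_sub, ← Category.assoc, hg0, hf1]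
    simp
  have hepi0 : Epi (P.π.f 0) := inferInstance
  let s : S.X₃ ⟶ S.X₂ := P.exact₀.desc h hdh
  have hs : P.π.f 0 ≫ s = h := P.exact₀.g_desc h hdh
  have hsg : s ≫ S.g = 𝟙 S.X₃ := by
    apply (cancel_epi (P.π.f 0)).mp
    refine Eq.trans (Category.assoc _ _ _).symm ?_
    rw [hs]
    simp only [Category.comp_id, h, Preadditive.sub_comp, Category.assoc, S.zero,
      Limits.comp_zero, sub_zero, hl]
    exact (sub_zero _).trans (Category.comp_id (P.π.f 0)).symm
  -- from the section s, construct a retraction of S.f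
  have hretr : (𝟙 S.X₂ - S.g ≫ s) ≫ S.g = 0 := by
    rw [Preadditive.sub_comp, Category.id_comp, Category.assoc, hsg, Category.comp_id, sub_self]
  let t : S.X₂ ⟶ S.X₁ := hS.exact.lift (𝟙 S.X₂ - S.g ≫ s) hretr
  have ht : t ≫ S.f = 𝟙 S.X₂ - S.g ≫ s := hS.exact.lift_f _ _
  refine ⟨t, ?_⟩
  rw [← cancel_mono S.f, Category.assoc, ht, Category.id_comp, Preadditive.comp_sub,
    Category.comp_id, ← Category.assoc, S.zero, Limits.zero_comp, sub_zero]

end Aux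

set_option maxHeartbeats 1000000 in
/-- If `φ : R → Q` is an injective ring epimorphism with `Q` flat as a left `R`-module,
then every weak-injective left `R`-module `M` (i.e. `Ext^1_R(I, M) = 0` for every `I` of
flat dimension `≤ 1`) is h-divisible and Matlis-cotorsion. -/
theorem weakInjective_hdivisible_matlisCotorsion {R Q : Type u} [Ring R] [Ring Q]
    (φ : R →+* Q) (hinj : Function.Injective φ) (hepi : IsRingEpi φ)
    [Module R Q] (hl : ∀ (r : R) (q : Q), r • q = φ r * q)
    (hflat : IsFlatLeftModule R Q)
    (M : Type u) [AddCommGroup M] [Module R M]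
    (hwi : ∀ (I : Type u) [AddCommGroup I] [Module R I],
      FlatDimLE1 R I → Subsingleton (extGroup R 1 I M)) :
    (∀ m : M, ∃ f : Q →ₗ[R] M, f 1 = m) ∧ Subsingleton (extGroup R 1 Q M) := by
  classical
  -- φ as an `R`-linear map
  let φₗ : R →ₗ[R] Q :=
    { toFun := φ
      map_add' := fun x y => map_add φ x y
      map_smul' := fun r x => by simp [smul_eq_mul, map_mul, hl] }
  have hφₗ : ∀ r : R, φₗ r = φ r := fun _ => rfl
  -- `Q` has flat dimension at most 1
  have flatQ : FlatDimLE1 R Q := by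
    refine ⟨PUnit, inferInstance, inferInstance, Q, inferInstance, inferInstance,
      0, LinearMap.id, isFlatLeftModule_punit R, hflat, ?_, ?_, ?_⟩
    · intro a b _
      exact Subsingleton.elim a b
    · exact fun q => ⟨q, rfl⟩
    · simp
  -- the cokernel `K = Q / φ(R)` has flat dimension at most 1
  have flatK : FlatDimLE1 R (Q ⧸ LinearMap.range φₗ) := by
    refine ⟨R, inferInstance, inferInstance, Q, inferInstance, inferInstance,
      φₗ, (LinearMap.range φₗ).mkQ, isFlatLeftModule_self R, hflat, hinj,
      Submodule.mkQ_surjective _, (Submodule.ker_mkQ _).symm⟩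
  refine ⟨?_, hwi Q flatQ⟩
  intro m₀
  set K := Q ⧸ LinearMap.range φₗ with hK
  -- the pushout extension `0 → M → E → K → 0`
  let fm : R →ₗ[R] M := LinearMap.toSpanSingleton R M m₀
  let W : Submodule R (M × Q) := LinearMap.range (fm.prod (-φₗ))
  let iE : M →ₗ[R] (M × Q) ⧸ W := W.mkQ.comp (LinearMap.inl R M Q)
  have hWker : W ≤ LinearMap.ker (((LinearMap.range φₗ).mkQ).comp (LinearMap.snd R M Q)) := by
    rintro x ⟨r, rfl⟩
    simp only [LinearMap.mem_ker, LinearMap.comp_apply, LinearMap.snd_apply,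
      LinearMap.prod_apply, Pi.prod, LinearMap.neg_apply, Submodule.mkQ_apply,
      Submodule.Quotient.mk_eq_zero]
    exact neg_mem (LinearMap.mem_range_self φₗ r)
  let pE : ((M × Q) ⧸ W) →ₗ[R] K :=
    W.liftQ (((LinearMap.range φₗ).mkQ).comp (LinearMap.snd R M Q)) hWker
  have hmemW : ∀ r : R, (r • m₀, -φ r) ∈ W := by
    intro r
    exact ⟨r, by simp [fm, LinearMap.toSpanSingleton_apply, hφₗ]⟩
  have hiE_inj : Function.Injective iE := by
    intro a b hab
    have h0 : iE (a - b) = 0 := by rw [map_sub, hab, sub_self]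
    have hW0 : ((a - b, (0 : Q)) : M × Q) ∈ W :=
      (Submodule.Quotient.mk_eq_zero W).mp h0
    obtain ⟨r, hr⟩ := hW0
    have h1 : -φ r = 0 := congrArg Prod.snd hr
    have h2 : r = 0 := hinj (by rw [map_zero]; exact (neg_eq_zero.mp h1))
    have h3 : (r : R) • m₀ = a - b := by
      have := congrArg Prod.fst hr
      simpa [fm, LinearMap.toSpanSingleton_apply] using this
    rw [h2, zero_smul] at h3
    exact sub_eq_zero.mp h3.symm
  have hpE_surj : Function.Surjective pE := by
    intro k
    obtain ⟨q, rfl⟩ := Submodule.mkQ_surjective _ k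
    exact ⟨W.mkQ (0, q), by simp [pE]⟩
  have hzero : ∀ m : M, pE (iE m) = 0 := by
    intro m
    simp [pE, iE]
  -- the short complex in `ModuleCat R`
  let S : CategoryTheory.ShortComplex (ModuleCat.{u} R) :=
    CategoryTheory.ShortComplex.mk (ModuleCat.ofHom iE) (ModuleCat.ofHom pE) (by
      ext m
      exact hzero m)
  haveI hmono : CategoryTheory.Mono S.f := (ModuleCat.mono_iff_injective _).2 hiE_inj
  haveI hepi' : CategoryTheory.Epi S.g := (ModuleCat.epi_iff_surjective _).2 hpE_surj
  have hS : S.ShortExact := by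
    refine ⟨?_⟩
    · rw [CategoryTheory.ShortComplex.moduleCat_exact_iff]
      intro x₂ hx₂
      obtain ⟨⟨m, q⟩, rfl⟩ := Submodule.mkQ_surjective W x₂
      have hq0 : ((LinearMap.range φₗ).mkQ ∘ₗ LinearMap.snd R M Q) (m, q) = 0 := hx₂
      have hq : q ∈ LinearMap.range φₗ := by
        simpa [Submodule.Quotient.mk_eq_zero] using hq0
      obtain ⟨r, hr⟩ := hq
      refine ⟨m + r • m₀, ?_⟩
      show W.mkQ (m + r • m₀, 0) = W.mkQ (m, q)
      rw [Submodule.mkQ_apply, Submodule.mkQ_apply, Submodule.Quotient.eq]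
      have : ((m + r • m₀, (0 : Q)) : M × Q) - (m, q) = (r • m₀, -φ r) := by
        rw [← hr, hφₗ]
        ext <;> simp
      rw [this]
      exact hmemW r
  obtain ⟨rE, hrE⟩ := retraction_of_ext1_subsingleton S hS (hwi K flatK)
  -- assemble the desired map `Q → M`
  let jQ : Q →ₗ[R] (M × Q) ⧸ W := W.mkQ.comp (LinearMap.inr R M Q)
  refine ⟨(rE.hom : ((M × Q) ⧸ W) →ₗ[R] M).comp jQ, ?_⟩
  have hj1 : jQ 1 = iE m₀ := by
    show W.mkQ (0, (1 : Q)) = W.mkQ (m₀, 0)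
    rw [Submodule.mkQ_apply, Submodule.mkQ_apply, Submodule.Quotient.eq]
    have h1 : (((0 : M), (1 : Q)) : M × Q) - (m₀, 0) = -((1 : R) • m₀, -φ 1) := by
      ext <;> simp
    rw [h1]
    exact neg_mem (hmemW 1)
  have happ := congrArg (fun f => ModuleCat.Hom.hom f m₀) hrE
  simp only [ModuleCat.hom_comp, ModuleCat.hom_id, LinearMap.comp_apply, LinearMap.id_apply] at happ
  show rE.hom (jQ 1) = m₀
  rw [hj1]
  exact happ.trans rfl
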